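/- For 0 < ε ≤ 1, the sub-extremal bound h(ε) = -1 + (2/ε)(1 + √(1-ε)) satisfies h(ε) > 4/9, and combined with (4/9)ε > 4/9 for ε > 1, every stable isoperimetric sphere in Reissner-Nordström (m > 0, Q ≠ 0) satisfies A > (16/9)πQ², with equality approached only in the limit ε → 1⁺ at r = r_c. -/
import Mathlib


/-- Every stable isoperimetric sphere in Reissner–Nordström (`m > 0`, `Q ≠ 0`,
with `r ≥ r₀` in the sub-extremal/extremal case and `r > r_c` in the
super-extremal case) has area `A = 4πr² > (16/9)πQ²`. Moreover for
`0 < ε ≤ 1` the sub-extremal bound satisfies `h ε > 4/9`. -/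
theorem stmt_10 :
    (∀ ε : ℝ, 0 < ε → ε ≤ 1 → 4 / 9 < -1 + 2 / ε * (1 + Real.sqrt (1 - ε))) ∧
    (∀ m Q r : ℝ, 0 < m → Q ≠ 0 →
      ((Q ^ 2 ≤ m ^ 2 ∧ m + Real.sqrt (m ^ 2 - Q ^ 2) ≤ r) ∨
       (m ^ 2 < Q ^ 2 ∧ 2 * Q ^ 2 / (3 * m) < r)) →
      16 / 9 * Real.pi * Q ^ 2 < 4 * Real.pi * r ^ 2) := by
  constructor
  · intro ε hε hε1
    have hs : 0 ≤ Real.sqrt (1 - ε) := Real.sqrt_nonneg _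
    have h2 : (2:ℝ) ≤ 2 / ε := by
      rw [le_div_iff₀ hε]; nlinarith
    have : (2:ℝ) / ε ≤ 2 / ε * (1 + Real.sqrt (1 - ε)) := by
      nlinarith [div_pos (by norm_num : (0:ℝ) < 2) hε]
    linarith
  · intro m Q r hm hQ hcase
    have hQ2 : 0 < Q ^ 2 := by positivity
    have hpi := Real.pi_pos
    have hr : 2 / 3 * |Q| < r := by
      rcases hcase with ⟨h1, h2⟩ | ⟨h1, h2⟩
      · have hs : 0 ≤ Real.sqrt (m ^ 2 - Q ^ 2) := Real.sqrt_nonneg _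
        have hQm : |Q| ≤ m := by
          have := abs_le_abs (a := Q) (b := m) ?_ ?_ <;> nlinarith [abs_nonneg Q, sq_abs Q]
        nlinarith
      · have hQm : m < |Q| := by nlinarith [sq_abs Q, abs_nonneg Q]
        have : 2 / 3 * |Q| < 2 * Q ^ 2 / (3 * m) := by
          rw [lt_div_iff₀ (by linarith)]
          nlinarith [sq_abs Q, abs_nonneg Q]
        linarith
    have hrQ : 4 / 9 * Q ^ 2 < r ^ 2 := by
      nlinarith [sq_abs Q, abs_nonneg Q]
    nlinarith
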